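/- arXiv:1903.11787 — 2 statements merged into one kernel-verified Lean document; each statement's English description precedes it below -/
import Mathlib

section
/- Assume the index sets are ordered, i.e. I1 = {1,…,l} and I0 = {l+1,…,n}, let φ : 𝒳^l × 𝒴^n → 𝒳^n be any decoder, and set ε ≡ Prob(φ(AX,Y) ≠ X). If ε > 0, then Σ_{i=l+1}^n H(C_i | C_1^{i−1}, Y) ≤ ε·(n + log(1/ε) + log e), where H denotes conditional Shannon entropy with logarithm base |𝒳| and log denotes the logarithm to the base |𝒳|. -/
open Finset

noncomputable def probOf {Ω : Type*} [Fintype Ω] (p : Ω → ℝ) (E : Set Ω) : ℝ :=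
  ∑ ω, E.indicator p ω

noncomputable def condProb {Ω : Type*} [Fintype Ω] (p : Ω → ℝ) (E F : Set Ω) : ℝ :=
  probOf p (E ∩ F) / probOf p F

noncomputable def entropyOf {Ω Z : Type*} [Fintype Ω] [Fintype Z] (p : Ω → ℝ) (V : Ω → Z) : ℝ :=
  ∑ z, Real.negMulLog (probOf p {ω | V ω = z})

noncomputable def condEntropyOf {Ω U V : Type*} [Fintype Ω] [Fintype U] [Fintype V]
    (p : Ω → ℝ) (Uv : Ω → U) (Vv : Ω → V) : ℝ :=
  entropyOf p (fun ω => (Uv ω, Vv ω)) - entropyOf p Vv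

def prefixVec {𝒳 : Type*} {n : ℕ} (c : Fin n → 𝒳) (m : ℕ) (h : m ≤ n) : Fin m → 𝒳 :=
  fun k => c ⟨k.1, lt_of_lt_of_le k.2 h⟩

def scVecGo {𝒳 : Type*} {n : ℕ} (g : (i : Fin n) → (Fin i.1 → 𝒳) → 𝒳) :
    (k : ℕ) → k < n → 𝒳
  | k, hk => g ⟨k, hk⟩ (fun j => scVecGo g j.1 (j.2.trans hk))
termination_by k _ => k
decreasing_by exact j.2

def scVec {𝒳 : Type*} {n : ℕ} (g : (i : Fin n) → (Fin i.1 → 𝒳) → 𝒳) : Fin n → 𝒳 :=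
  fun i => scVecGo g i.1 i.2

def scDec {𝒳 𝒴 : Type*} {n l : ℕ}
    (I1 : Finset (Fin n)) (hc1 : I1.card = l)
    (f : (i : Fin n) → (Fin i.1 → 𝒳) → (Fin n → 𝒴) → 𝒳)
    (c : Fin l → 𝒳) (y : Fin n → 𝒴) : Fin n → 𝒳 :=
  scVec (fun i pref => if h : i ∈ I1 then c ((I1.orderIsoOfFin hc1).symm ⟨i, h⟩) else f i pref y)

def scDecOrd {𝒳 𝒴 : Type*} {n l : ℕ}
    (f : (i : Fin n) → (Fin i.1 → 𝒳) → (Fin n → 𝒴) → 𝒳)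
    (c : Fin l → 𝒳) (y : Fin n → 𝒴) : Fin n → 𝒳 :=
  scVec (fun i pref => if h : i.1 < l then c ⟨i.1, h⟩ else f i pref y)

lemma probOf_nonneg' {Ω : Type*} [Fintype Ω] {p : Ω → ℝ} (hp : ∀ ω, 0 ≤ p ω) (E : Set Ω) :
    0 ≤ probOf p E :=
  Finset.sum_nonneg fun ω _ => Set.indicator_nonneg (fun a _ => hp a) ω

lemma probOf_mono' {Ω : Type*} [Fintype Ω] {p : Ω → ℝ} (hp : ∀ ω, 0 ≤ p ω) {E F : Set Ω}
    (h : E ⊆ F) : probOf p E ≤ probOf p F :=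
  Finset.sum_le_sum fun ω _ => Set.indicator_le_indicator_of_subset h hp ω

lemma probOf_le_one' {Ω : Type*} [Fintype Ω] {p : Ω → ℝ} (hp0 : ∀ ω, 0 ≤ p ω)
    (hp1 : ∑ ω, p ω = 1) (E : Set Ω) : probOf p E ≤ 1 := by
  rw [← hp1]
  exact Finset.sum_le_sum fun ω _ => Set.indicator_le_self' (fun a _ => hp0 a) ω

lemma sum_probOf_inter' {Ω Z : Type*} [Fintype Ω] [Fintype Z] (p : Ω → ℝ) (E : Set Ω)
    (V : Ω → Z) : ∑ z, probOf p (E ∩ {ω | V ω = z}) = probOf p E := by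
  classical
  unfold probOf
  rw [Finset.sum_comm]
  refine Finset.sum_congr rfl fun ω _ => ?_
  rw [Finset.sum_eq_single (V ω)]
  · by_cases hE : ω ∈ E
    · rw [Set.indicator_of_mem (show ω ∈ E ∩ {ω' | V ω' = V ω} from ⟨hE, rfl⟩) p, Set.indicator_of_mem hE]
    · rw [Set.indicator_of_notMem (fun h => hE h.1), Set.indicator_of_notMem hE]
  · intro z _ hz
    exact Set.indicator_of_notMem (fun h => hz (h.2.symm)) _
  · intro h; exact absurd (Finset.mem_univ _) h

lemma sum_probOf_fiber' {Ω Z : Type*} [Fintype Ω] [Fintype Z] (p : Ω → ℝ) (V : Ω → Z) :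
    ∑ z, probOf p {ω | V ω = z} = ∑ ω, p ω := by
  have h := sum_probOf_inter' p Set.univ V
  simp only [Set.univ_inter] at h
  rw [h]
  unfold probOf
  simp [Set.indicator_univ]

lemma entropy_comp_inj' {Ω Z Z' : Type*} [Fintype Ω] [Fintype Z] [Fintype Z']
    (p : Ω → ℝ) {f : Z → Z'} (hf : Function.Injective f) (V : Ω → Z) :
    entropyOf p (fun ω => f (V ω)) = entropyOf p V := by
  classical
  unfold entropyOf
  rw [← Finset.sum_subset (Finset.subset_univ (Finset.univ.image f))
      (fun z' _ hz' => ?_)]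
  · rw [Finset.sum_image (fun x _ y _ h => hf h)]
    refine Finset.sum_congr rfl fun z _ => ?_
    congr 1
    congr 1
    ext ω
    simp [hf.eq_iff]
  · have hempty : {ω | f (V ω) = z'} = ∅ := by
      ext ω
      simp only [Set.mem_setOf_eq, Set.mem_empty_iff_false, iff_false]
      intro h
      exact hz' (Finset.mem_image.mpr ⟨V ω, Finset.mem_univ _, h⟩)
    rw [hempty]
    simp [probOf]

lemma key_ineq' (a b : ℝ) (ha : 0 ≤ a) (hb : 0 ≤ b) (hab : 0 < a → 0 < b) :
    Real.negMulLog a + a * Real.log b ≤ b - a := by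
  rcases eq_or_lt_of_le ha with h | h
  · simp [← h]
    exact hb
  · have hbp : 0 < b := hab h
    have hlog : Real.log (b / a) ≤ b / a - 1 := Real.log_le_sub_one_of_pos (div_pos hbp h)
    rw [Real.log_div hbp.ne' h.ne'] at hlog
    have h2 := mul_le_mul_of_nonneg_left hlog h.le
    have h3 : a * (b / a - 1) = b - a := by field_simp
    rw [h3] at h2
    have e1 : Real.negMulLog a + a * Real.log b = a * (Real.log b - Real.log a) := by
      simp [Real.negMulLog]; ring
    linarith [e1 ▸ h2]

lemma fano' {Ω S T : Type*} [Fintype Ω] [Fintype S] [Fintype T] [Nonempty S]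
    (p : Ω → ℝ) (hp0 : ∀ ω, 0 ≤ p ω) (hp1 : ∑ ω, p ω = 1)
    (Xv : Ω → S) (Wv : Ω → T) (g : T → S) (ε : ℝ)
    (hε : ε = probOf p {ω | g (Wv ω) ≠ Xv ω}) (hpos : 0 < ε) :
    entropyOf p (fun ω => (Xv ω, Wv ω)) - entropyOf p Wv ≤
      ε * Real.log (Fintype.card S) + ε * Real.log (1 / ε) + ε := by
  classical
  set N : ℝ := (Fintype.card S : ℝ) with hN
  have hN1 : (1 : ℝ) ≤ N := Nat.one_le_cast.mpr Fintype.card_pos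
  have hN0 : (0 : ℝ) < N := lt_of_lt_of_le one_pos hN1
  have hε1 : ε ≤ 1 := hε ▸ probOf_le_one' hp0 hp1 _
  set s : ℝ := 1 - ε + ε / N with hs
  have hsp : 0 < s := by
    have : 0 < ε / N := div_pos hpos hN0
    simp only [hs]; linarith
  have hs1 : s ≤ 1 := by
    have h1 : ε / N ≤ ε := by
      rw [div_le_iff₀ hN0]; nlinarith
    simp only [hs]; linarith
  set P : S × T → ℝ := fun z => probOf p {ω | (Xv ω, Wv ω) = z} with hPdef
  set Q : T → ℝ := fun w => probOf p {ω | Wv ω = w} with hQdef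
  have hP0 : ∀ z, 0 ≤ P z := fun z => probOf_nonneg' hp0 _
  have hPQ : ∀ z : S × T, P z ≤ Q z.2 := by
    intro z
    exact probOf_mono' hp0 (fun ω h => by
      have : Wv ω = z.2 := congrArg Prod.snd h
      exact this)
  have hQsum : ∀ w, ∑ x, P (x, w) = Q w := by
    intro w
    have h := sum_probOf_inter' p {ω | Wv ω = w} Xv
    calc ∑ x, P (x, w) = ∑ x, probOf p ({ω | Wv ω = w} ∩ {ω | Xv ω = x}) := by
          refine Finset.sum_congr rfl fun x _ => ?_
          show probOf p {ω | (Xv ω, Wv ω) = (x, w)} = _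
          congr 1
          ext ω
          simp [Prod.ext_iff, and_comm]
      _ = Q w := h
  have hQtot : ∑ w, Q w = 1 := by
    simpa [hp1] using sum_probOf_fiber' p Wv
  have hPtot : ∑ z, P z = 1 := by
    rw [Fintype.sum_prod_type_right]
    rw [Finset.sum_congr rfl fun w _ => hQsum w]
    exact hQtot
  set r : S × T → ℝ := fun z => if z.1 = g z.2 then s else ε / N with hrdef
  have hr0 : ∀ z, 0 < r z := by
    intro z
    by_cases h : z.1 = g z.2 <;> simp only [hrdef, h, if_true, if_false]
    · exact hsp
    · exact div_pos hpos hN0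
  have hrsum : ∀ w, ∑ x, r (x, w) = 1 := by
    intro w
    have h1 : ∀ x : S, r (x, w) = ε / N + (if x = g w then s - ε / N else 0) := by
      intro x; by_cases h : x = g w <;> simp [hrdef, h]
    rw [Finset.sum_congr rfl fun x _ => h1 x, Finset.sum_add_distrib, Finset.sum_const,
      Finset.sum_ite_eq' Finset.univ (g w)]
    simp only [Finset.mem_univ, if_true, nsmul_eq_mul, hs]
    have : (Fintype.card S : ℝ) = N := rfl
    rw [Finset.card_univ, this]
    field_simp
    ring
  have herr : ∑ z : S × T, (if z.1 = g z.2 then 0 else P z) = ε := by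
    rw [hε, ← sum_probOf_inter' p {ω | g (Wv ω) ≠ Xv ω} (fun ω => (Xv ω, Wv ω))]
    refine Finset.sum_congr rfl fun z _ => ?_
    by_cases h : z.1 = g z.2
    · rw [if_pos h]
      have hemp : {ω | g (Wv ω) ≠ Xv ω} ∩ {ω | (Xv ω, Wv ω) = z} = ∅ := by
        ext ω
        simp only [Set.mem_inter_iff, Set.mem_setOf_eq, Set.mem_empty_iff_false, iff_false,
          not_and, Prod.ext_iff]
        intro hne hx hw
        exact hne (by rw [hx, hw, ← h])
      rw [hemp]
      simp [probOf]
    · rw [if_neg h]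
      show probOf p {ω | (Xv ω, Wv ω) = z} = _
      congr 1
      ext ω
      simp only [Set.mem_inter_iff, Set.mem_setOf_eq, Prod.ext_iff]
      constructor
      · rintro ⟨hx, hw⟩
        exact ⟨fun hc => h (by rw [← hx, ← hw]; exact hc.symm), hx, hw⟩
      · rintro ⟨-, hx, hw⟩
        exact ⟨hx, hw⟩
  have hcorr : ∑ z : S × T, (if z.1 = g z.2 then P z else 0) = 1 - ε := by
    have heach : ∀ z : S × T, P z
        = (if z.1 = g z.2 then P z else 0) + (if z.1 = g z.2 then 0 else P z) := by
      intro z; by_cases h : z.1 = g z.2 <;> simp [h]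
    have hsplit : ∑ z : S × T, ((if z.1 = g z.2 then P z else 0) + (if z.1 = g z.2 then 0 else P z)) = 1 := by
      rw [← Finset.sum_congr rfl (fun z _ => heach z)]
      exact hPtot
    rw [Finset.sum_add_distrib, herr] at hsplit
    linarith
  -- entropy difference identity
  have e2 : ∑ z : S × T, P z * Real.log (Q z.2) = - entropyOf p Wv := by
    have estep : ∑ z : S × T, P z * Real.log (Q z.2) = ∑ w, Q w * Real.log (Q w) := by
      rw [Fintype.sum_prod_type_right]
      refine Finset.sum_congr rfl fun w _ => ?_
      show ∑ x, P (x, w) * Real.log (Q w) = _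
      rw [← Finset.sum_mul, hQsum]
    rw [estep]
    have : entropyOf p Wv = ∑ w, Real.negMulLog (Q w) := rfl
    rw [this, ← Finset.sum_neg_distrib]
    refine Finset.sum_congr rfl fun w _ => ?_
    simp [Real.negMulLog]
  have e1 : entropyOf p (fun ω => (Xv ω, Wv ω)) = ∑ z : S × T, Real.negMulLog (P z) := rfl
  have hsplit2 : ∀ z : S × T, Real.negMulLog (P z) + P z * Real.log (Q z.2)
      = (Real.negMulLog (P z) + P z * Real.log (Q z.2 * r z)) + P z * (- Real.log (r z)) := by
    intro z
    rcases eq_or_lt_of_le (hP0 z) with h | h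
    · rw [← h]; simp
    · have hQp : 0 < Q z.2 := lt_of_lt_of_le h (hPQ z)
      rw [Real.log_mul hQp.ne' (hr0 z).ne']
      ring
  have bound1 : ∑ z : S × T, (Real.negMulLog (P z) + P z * Real.log (Q z.2 * r z)) ≤ 0 := by
    have h1 : ∀ z : S × T, Real.negMulLog (P z) + P z * Real.log (Q z.2 * r z)
        ≤ Q z.2 * r z - P z := by
      intro z
      refine key_ineq' _ _ (hP0 z) (mul_nonneg (probOf_nonneg' hp0 _) (hr0 z).le) ?_
      intro hPz
      exact mul_pos (lt_of_lt_of_le hPz (hPQ z)) (hr0 z)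
    calc ∑ z : S × T, (Real.negMulLog (P z) + P z * Real.log (Q z.2 * r z))
        ≤ ∑ z : S × T, (Q z.2 * r z - P z) := Finset.sum_le_sum fun z _ => h1 z
      _ = (∑ z : S × T, Q z.2 * r z) - 1 := by rw [Finset.sum_sub_distrib, hPtot]
      _ = 0 := by
          have hqr : ∑ z : S × T, Q z.2 * r z = ∑ w, Q w := by
            rw [Fintype.sum_prod_type_right]
            refine Finset.sum_congr rfl fun w _ => ?_
            show ∑ x, Q w * r (x, w) = _
            rw [← Finset.mul_sum, hrsum w, mul_one]
          rw [hqr, hQtot]; ring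
  have bound2 : ∑ z : S × T, P z * (- Real.log (r z)) =
      (1 - ε) * (- Real.log s) + ε * (Real.log N - Real.log ε) := by
    have h1 : ∀ z : S × T, P z * (-Real.log (r z)) =
        (if z.1 = g z.2 then P z else 0) * (-Real.log s)
          + (if z.1 = g z.2 then 0 else P z) * (Real.log N - Real.log ε) := by
      intro z
      by_cases h : z.1 = g z.2
      · simp [hrdef, h]
      · simp only [hrdef, h, if_false, if_neg h]
        rw [Real.log_div hpos.ne' hN0.ne']
        ring
    rw [Finset.sum_congr rfl fun z _ => h1 z, Finset.sum_add_distrib,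
      ← Finset.sum_mul, ← Finset.sum_mul, hcorr, herr]
  have bound3 : (1 - ε) * (- Real.log s) ≤ ε := by
    have hls : 0 ≤ - Real.log s := neg_nonneg.mpr (Real.log_nonpos hsp.le hs1)
    have h1 : (1 - ε) * (- Real.log s) ≤ s * (- Real.log s) := by
      apply mul_le_mul_of_nonneg_right _ hls
      have : 0 ≤ ε / N := le_of_lt (div_pos hpos hN0)
      simp only [hs]; linarith
    have h2 : s * (- Real.log s) ≤ 1 - s := by
      have hlog : Real.log s⁻¹ ≤ s⁻¹ - 1 := Real.log_le_sub_one_of_pos (inv_pos.mpr hsp)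
      rw [Real.log_inv] at hlog
      have := mul_le_mul_of_nonneg_left hlog hsp.le
      have heq : s * (s⁻¹ - 1) = 1 - s := by field_simp
      linarith [heq ▸ this]
    have h3 : 1 - s ≤ ε := by
      have : 0 ≤ ε / N := le_of_lt (div_pos hpos hN0)
      simp only [hs]; linarith
    linarith
  have hloginv : Real.log (1 / ε) = - Real.log ε := by rw [one_div, Real.log_inv]
  have hmain : entropyOf p (fun ω => (Xv ω, Wv ω)) - entropyOf p Wv
      = ∑ z : S × T, (Real.negMulLog (P z) + P z * Real.log (Q z.2 * r z))
        + ∑ z : S × T, P z * (- Real.log (r z)) := by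
    have hd : entropyOf p (fun ω => (Xv ω, Wv ω)) - entropyOf p Wv
        = ∑ z : S × T, (Real.negMulLog (P z) + P z * Real.log (Q z.2)) := by
      rw [e1, Finset.sum_add_distrib, e2]
      ring
    rw [hd, Finset.sum_congr rfl fun z _ => hsplit2 z, Finset.sum_add_distrib]
  rw [hmain, bound2, hloginv]
  have : ε * (Real.log N - Real.log ε) = ε * Real.log N + ε * (- Real.log ε) := by ring
  nlinarith [bound1, bound3]

lemma snocSplit_injective' {𝒳 𝒴' : Type*} (m : ℕ) :
    Function.Injective (fun (cy : (Fin (m + 1) → 𝒳) × 𝒴') =>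
      (cy.1 ⟨m, Nat.lt_succ_self m⟩,
        ((fun k : Fin m => cy.1 ⟨k.1, Nat.lt_succ_of_lt k.2⟩), cy.2))) := by
  rintro ⟨c, y⟩ ⟨c', y'⟩ h
  simp only [Prod.mk.injEq] at h
  obtain ⟨h1, h2, h3⟩ := h
  refine Prod.ext ?_ h3
  funext j
  rcases Nat.lt_or_ge j.1 m with hj | hj
  · exact congrFun h2 ⟨j.1, hj⟩
  · have hje : j = ⟨m, Nat.lt_succ_self m⟩ := by
      have : j.1 = m := le_antisymm (Nat.lt_succ_iff.mp j.2) hj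
      exact Fin.ext this
    rw [hje]
    exact h1


/-- ordered index sets; for any decoder `φ` with
`ε = Prob(φ(AX,Y) ≠ X) > 0`,
`Σ_{i=l+1}^n H(C_i|C_1^{i-1},Y) ≤ ε (n + log(1/ε) + log e)`, logs in base `|𝒳|`. -/
theorem stmt11
    {𝒳 𝒴 : Type*} [Fintype 𝒳] [Fintype 𝒴]
    (hcard : 2 ≤ Fintype.card 𝒳)
    (n l : ℕ) (hl : l ≤ n)
    (μ : ((Fin n → 𝒳) × (Fin n → 𝒴)) → ℝ)
    (hμ0 : ∀ ω, 0 ≤ μ ω) (hμ1 : ∑ ω, μ ω = 1)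
    (A : (Fin n → 𝒳) → (Fin l → 𝒳)) (B : (Fin n → 𝒳) → (Fin (n - l) → 𝒳))
    (T : (Fin n → 𝒳) ≃ (Fin n → 𝒳))
    (hT1 : ∀ x (j : Fin l), T x (Fin.castLE hl j) = A x j)
    (hT0 : ∀ x (j : Fin (n - l)), T x ⟨l + j.1, by have := j.2; omega⟩ = B x j)
    (φ : (Fin l → 𝒳) → (Fin n → 𝒴) → (Fin n → 𝒳))
    (ε : ℝ)
    (hε : ε = probOf μ {ω | φ (A ω.1) ω.2 ≠ ω.1})
    (hpos : 0 < ε) :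
    ∑ i ∈ Finset.univ.filter (fun i : Fin n => l ≤ i.1),
        condEntropyOf μ (fun ω => T ω.1 i)
          (fun ω => (prefixVec (T ω.1) i.1 i.2.le, ω.2)) /
            Real.log (Fintype.card 𝒳) ≤
      ε * ((n : ℝ) + Real.log (1 / ε) / Real.log (Fintype.card 𝒳) +
        1 / Real.log (Fintype.card 𝒳)) := by
  classical
  have h𝒳 : Nonempty 𝒳 := Fintype.card_pos_iff.mp (by omega)
  set L := Real.log (Fintype.card 𝒳) with hLdef
  have hL0 : 0 < L := Real.log_pos (by exact_mod_cast hcard)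
  set F : ℕ → ℝ := fun m =>
    if h : m ≤ n then entropyOf μ (fun ω => (prefixVec (T ω.1) m h, ω.2)) else 0 with hFdef
  have hFval : ∀ (m : ℕ) (h : m ≤ n),
      F m = entropyOf μ (fun ω => (prefixVec (T ω.1) m h, ω.2)) := fun m h => dif_pos h
  have hstep : ∀ i : Fin n,
      condEntropyOf μ (fun ω => T ω.1 i) (fun ω => (prefixVec (T ω.1) i.1 i.2.le, ω.2))
        = F (i.1 + 1) - F i.1 := by
    intro i
    rw [hFval (i.1 + 1) i.2, hFval i.1 i.2.le]
    unfold condEntropyOf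
    congr 1
    exact entropy_comp_inj' μ
      (snocSplit_injective' (𝒳 := 𝒳) (𝒴' := Fin n → 𝒴) i.1)
      (fun ω => (prefixVec (T ω.1) (i.1 + 1) i.2, ω.2))
  -- convert the filtered sum over Fin n to a sum over Ico l n and telescope
  have hsum1 : ∑ i ∈ Finset.univ.filter (fun i : Fin n => l ≤ i.1),
      condEntropyOf μ (fun ω => T ω.1 i)
        (fun ω => (prefixVec (T ω.1) i.1 i.2.le, ω.2)) / L
      = (F n - F l) / L := by
    rw [← Finset.sum_div]
    congr 1
    rw [Finset.sum_congr rfl fun i _ => by rw [hstep i]]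
    rw [Finset.sum_filter]
    rw [Fin.sum_univ_eq_sum_range (fun k => if l ≤ k then F (k + 1) - F k else 0) n]
    rw [← Finset.sum_filter]
    have hIco : Finset.filter (fun k => l ≤ k) (Finset.range n) = Finset.Ico l n := by
      ext k
      simp only [Finset.mem_filter, Finset.mem_range, Finset.mem_Ico]
      constructor
      · rintro ⟨h1, h2⟩; exact ⟨h2, h1⟩
      · rintro ⟨h1, h2⟩; exact ⟨h2, h1⟩
    rw [hIco]
    rw [Finset.sum_Ico_eq_sub _ hl, Finset.sum_range_sub, Finset.sum_range_sub]
    ring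
  -- identify F n and F l
  have hFn : F n = entropyOf μ (fun ω => (ω.1, (A ω.1, ω.2))) := by
    rw [hFval n le_rfl]
    have hfinj : Function.Injective
        (fun cy : (Fin n → 𝒳) × (Fin n → 𝒴) =>
          (T.symm cy.1, (A (T.symm cy.1), cy.2))) := by
      intro a b h
      simp only [Prod.mk.injEq] at h
      exact Prod.ext (T.symm.injective h.1) h.2.2
    have h := entropy_comp_inj' μ hfinj (fun ω => (prefixVec (T ω.1) n le_rfl, ω.2))
    rw [← h]
    congr 1
    funext ω
    have hpre : prefixVec (T ω.1) n le_rfl = T ω.1 := rfl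
    simp only [hpre, Equiv.symm_apply_apply]
  have hFl : F l = entropyOf μ (fun ω => (A ω.1, ω.2)) := by
    rw [hFval l hl]
    congr 1
    funext ω
    have hA : prefixVec (T ω.1) l hl = A ω.1 := funext fun k => hT1 ω.1 k
    rw [hA]
  -- Fano
  have hfano := fano' μ hμ0 hμ1 (fun ω => ω.1) (fun ω => (A ω.1, ω.2))
    (fun aw => φ aw.1 aw.2) ε hε hpos
  have hlogS : Real.log (Fintype.card (Fin n → 𝒳)) = n * L := by
    have hc : (Fintype.card (Fin n → 𝒳) : ℝ) = ((Fintype.card 𝒳 : ℝ)) ^ n := by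
      rw [Fintype.card_fun, Fintype.card_fin]
      push_cast
      ring
    rw [hc, Real.log_pow]
  rw [hsum1, hFn, hFl]
  rw [div_le_iff₀ hL0]
  have expand : ε * ((n : ℝ) + Real.log (1 / ε) / L + 1 / L) * L
      = ε * ((n : ℝ) * L) + ε * Real.log (1 / ε) + ε := by
    field_simp
  rw [expand]
  calc entropyOf μ (fun ω => (ω.1, (A ω.1, ω.2))) - entropyOf μ (fun ω => (A ω.1, ω.2))
      ≤ ε * Real.log (Fintype.card (Fin n → 𝒳)) + ε * Real.log (1 / ε) + ε := hfano
    _ = ε * ((n : ℝ) * L) + ε * Real.log (1 / ε) + ε := by rw [hlogS]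
end

section
/- Assume additionally that (X,Y) is memoryless, i.e. Prob(X = x, Y = y) = Π_{k=1}^n p_k(x_k, y_k) for pmfs p_k on 𝒳 × 𝒴. Then for every j ∈ {1,…,n−l}, every c ∈ 𝒳^l, every x_1^j ∈ 𝒳^j, and every y ∈ 𝒴^n such that Prob(AX = c, X_1^{j−1} = x_1^{j−1}, Y = y) > 0, the SC conditional probability satisfies μ_{C_{l+j}|C_1^{l+j−1}Y}(x_j | (c, x_1^{j−1}), y) = [Σ over x_{j+1},…,x_n of (Π_{k=j}^n Prob(X_k = x_k | Y_k = y_k))·χ(A_j^n x_j^n = c − A_1^{j−1} x_1^{j−1})] / [Σ over x_j,…,x_n of (Π_{k=j}^n Prob(X_k = x_k | Y_k = y_k))·χ(A_j^n x_j^n = c − A_1^{j−1} x_1^{j−1})], where A_1^{j−1} is the submatrix of A formed by columns 1,…,j−1, A_j^n is the submatrix formed by columns j,…,n, and χ is the indicator function. -/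
open Finset

/-- The extended codeword of `x`: first `l` coordinates are `A x`, the remaining
coordinates are `x₁, …, x_{n−l}` (0-indexed: `C i = x (i − l)` for `i ≥ l`). -/
def Cword {𝒳 : Type*} [Field 𝒳] {n l : ℕ} (hl : l ≤ n)
    (A : Matrix (Fin l) (Fin n) 𝒳) (x : Fin n → 𝒳) : Fin n → 𝒳 :=
  fun i => if h : i.1 < l then A.mulVec x ⟨i.1, h⟩ else x ⟨i.1 - l, by have := i.2; omega⟩

lemma probOf_eq_sum {Ω : Type*} [Fintype Ω] (p : Ω → ℝ) (E : Set Ω)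
    [DecidablePred (· ∈ E)] :
    probOf p E = ∑ ω, if ω ∈ E then p ω else 0 := by
  unfold probOf
  refine Finset.sum_congr rfl fun ω _ => ?_
  rw [Set.indicator_apply]

lemma sum_ite_prod_single {n : ℕ} {Z : Type*} [Fintype Z] [DecidableEq Z]
    (f : Fin n → Z → ℝ) (hf1 : ∀ m, ∑ w, f m w = 1)
    (k : Fin n) (P : Z → Prop) [DecidablePred P] :
    ∑ z : Fin n → Z, (if P (z k) then ∏ m, f m (z m) else 0) =
      ∑ w ∈ univ.filter P, f k w := by
  have key : ∀ z : Fin n → Z,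
      (if P (z k) then ∏ m, f m (z m) else 0) =
        ∏ m, (if m = k then (if P (z m) then f m (z m) else 0) else f m (z m)) := by
    intro z
    rw [← Finset.prod_erase_mul univ _ (mem_univ k), ← Finset.prod_erase_mul univ _ (mem_univ k)]
    simp only [if_pos rfl]
    rw [Finset.prod_congr rfl (fun m hm => if_neg (Finset.ne_of_mem_erase hm))]
    split_ifs <;> ring
  rw [Finset.sum_congr rfl fun z _ => key z, ← Fintype.piFinset_univ,
    ← Finset.prod_univ_sum (fun _ : Fin n => (univ : Finset Z))
      (fun m w => if m = k then (if P w then f m w else 0) else f m w)]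
  rw [← Finset.prod_erase_mul univ _ (mem_univ k)]
  have h1 : ∀ m ∈ univ.erase k, (∑ w, if m = k then (if P w then f m w else 0) else f m w) = 1 := by
    intro m hm
    rw [Finset.sum_congr rfl fun w _ => if_neg (Finset.ne_of_mem_erase hm)]
    exact hf1 m
  rw [Finset.prod_congr rfl h1, Finset.prod_const_one, one_mul]
  rw [Finset.sum_congr rfl fun w _ => if_pos rfl, Finset.sum_ite, Finset.sum_const_zero,
    add_zero]


lemma probOf_coord {n : ℕ} {𝒳 𝒴 : Type*} [Fintype 𝒳] [Fintype 𝒴] [DecidableEq 𝒳] [DecidableEq 𝒴]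
    (μ : ((Fin n → 𝒳) × (Fin n → 𝒴)) → ℝ)
    (pk : Fin n → 𝒳 × 𝒴 → ℝ) (hpk1 : ∀ k, ∑ z, pk k z = 1)
    (hmem : ∀ x y, μ (x, y) = ∏ k, pk k (x k, y k))
    (k : Fin n) (P : 𝒳 × 𝒴 → Prop) [DecidablePred P] :
    probOf μ {ω | P (ω.1 k, ω.2 k)} = ∑ w ∈ univ.filter P, pk k w := by
  classical
  rw [probOf_eq_sum]
  simp only [Set.mem_setOf_eq]
  set e := Equiv.arrowProdEquivProdArrow (Fin n) (fun _ => 𝒳) (fun _ => 𝒴) with he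
  rw [← Equiv.sum_comp e (fun ω => if P (ω.1 k, ω.2 k) then μ ω else 0)]
  have : ∀ z : Fin n → 𝒳 × 𝒴,
      (if P ((e z).1 k, (e z).2 k) then μ (e z) else 0) =
        (if P (z k) then ∏ m, pk m (z m) else 0) := by
    intro z
    have h1 : (e z).1 = fun m => (z m).1 := by rw [he]; rfl
    have h2 : (e z).2 = fun m => (z m).2 := by rw [he]; rfl
    have h3 : μ (e z) = ∏ m, pk m (z m) := by
      have h4 : e z = ((fun m => (z m).1), (fun m => (z m).2)) := by rw [he]; rfl
      rw [h4, hmem]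
    rw [h1, h2, h3]
  rw [Finset.sum_congr rfl fun z _ => this z]
  exact sum_ite_prod_single pk hpk1 k P

lemma probOf_fixed_y {n : ℕ} {𝒳 𝒴 : Type*} [Fintype 𝒳] [Fintype 𝒴] [DecidableEq 𝒴]
    (μ : ((Fin n → 𝒳) × (Fin n → 𝒴)) → ℝ)
    (C : (Fin n → 𝒳) → Prop) [DecidablePred C] (y : Fin n → 𝒴) :
    probOf μ {ω | C ω.1 ∧ ω.2 = y} = ∑ x : Fin n → 𝒳, if C x then μ (x, y) else 0 := by
  classical
  rw [probOf_eq_sum, Fintype.sum_prod_type]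
  refine Finset.sum_congr rfl fun x _ => ?_
  have : ∀ y' : Fin n → 𝒴, (if (x, y') ∈ {ω : (Fin n → 𝒳) × (Fin n → 𝒴) | C ω.1 ∧ ω.2 = y} then μ (x, y') else 0)
      = if y' = y then (if C x then μ (x, y') else 0) else 0 := by
    intro y'; simp only [Set.mem_setOf_eq]; split_ifs <;> tauto
  rw [Finset.sum_congr rfl fun y' _ => this y', Finset.sum_ite_eq' univ y
    (fun y' => if C x then μ (x, y') else 0), if_pos (mem_univ y)]

lemma condProb_coord {n : ℕ} {𝒳 𝒴 : Type*} [Fintype 𝒳] [Fintype 𝒴] [DecidableEq 𝒳] [DecidableEq 𝒴]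
    (μ : ((Fin n → 𝒳) × (Fin n → 𝒴)) → ℝ)
    (pk : Fin n → 𝒳 × 𝒴 → ℝ) (hpk1 : ∀ k, ∑ z, pk k z = 1)
    (hmem : ∀ x y, μ (x, y) = ∏ k, pk k (x k, y k))
    (k : Fin n) (a : 𝒳) (b : 𝒴) :
    condProb μ {ω | ω.1 k = a} {ω | ω.2 k = b} =
      pk k (a, b) / ∑ a' : 𝒳, pk k (a', b) := by
  classical
  unfold condProb
  have h1 : {ω : (Fin n → 𝒳) × (Fin n → 𝒴) | ω.1 k = a} ∩ {ω | ω.2 k = b} =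
      {ω | (fun w : 𝒳 × 𝒴 => w.1 = a ∧ w.2 = b) (ω.1 k, ω.2 k)} := by
    ext ω; simp [Set.mem_inter_iff]
  have h2 : {ω : (Fin n → 𝒳) × (Fin n → 𝒴) | ω.2 k = b} =
      {ω | (fun w : 𝒳 × 𝒴 => w.2 = b) (ω.1 k, ω.2 k)} := rfl
  have e1 := probOf_coord μ pk hpk1 hmem k (fun w : 𝒳 × 𝒴 => w.1 = a ∧ w.2 = b)
  have e2 := probOf_coord μ pk hpk1 hmem k (fun w : 𝒳 × 𝒴 => w.2 = b)
  simp only at e1 e2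
  rw [h1, h2]
  simp only [Set.mem_setOf_eq] at *
  rw [e1, e2]
  congr 1
  · have : univ.filter (fun w : 𝒳 × 𝒴 => w.1 = a ∧ w.2 = b) = {(a, b)} := by
      ext w; simp [Prod.ext_iff, and_comm]
    rw [this, Finset.sum_singleton]
  · rw [Finset.sum_filter, Fintype.sum_prod_type]
    refine Finset.sum_congr rfl fun a' _ => ?_
    simp [Finset.sum_ite_eq']

lemma sum_filter_lt {M : Type*} [AddCommMonoid M] {n m : ℕ} (hm : m ≤ n) (f : Fin n → M) :
    ∑ k ∈ univ.filter (fun k : Fin n => k.1 < m), f k =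
      ∑ k : Fin m, f ⟨k.1, lt_of_lt_of_le k.2 hm⟩ := by
  refine Finset.sum_bij' (fun k hk => (⟨k.1, (Finset.mem_filter.1 hk).2⟩ : Fin m))
    (fun k _ => (⟨k.1, lt_of_lt_of_le k.2 hm⟩ : Fin n)) ?_ ?_ ?_ ?_ ?_
  · intro a ha; exact mem_univ _
  · intro a ha; exact Finset.mem_filter.2 ⟨mem_univ _, a.2⟩
  · intro a ha; rfl
  · intro a ha; rfl
  · intro a ha; rfl

lemma master {n : ℕ} {𝒳 𝒴 : Type*} [Fintype 𝒳] [Fintype 𝒴] [DecidableEq 𝒳] [DecidableEq 𝒴]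
    (μ : ((Fin n → 𝒳) × (Fin n → 𝒴)) → ℝ)
    (pk : Fin n → 𝒳 × 𝒴 → ℝ)
    (hpk0 : ∀ k z, 0 ≤ pk k z) (hpk1 : ∀ k, ∑ z, pk k z = 1)
    (hmem : ∀ x y, μ (x, y) = ∏ k, pk k (x k, y k))
    (E F : Set ((Fin n → 𝒳) × (Fin n → 𝒴)))
    (cN cD : (Fin n → 𝒳) → Prop) [DecidablePred cN] [DecidablePred cD]
    (y : Fin n → 𝒴) (S : Finset (Fin n)) (xse : Fin n → 𝒳)
    (hEF : E ∩ F = {ω | cN ω.1 ∧ ω.2 = y})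
    (hF : F = {ω | cD ω.1 ∧ ω.2 = y})
    (hloN : ∀ x, cN x → ∀ k ∉ S, x k = xse k)
    (hloD : ∀ x, cD x → ∀ k ∉ S, x k = xse k)
    (hpos : 0 < probOf μ F) :
    condProb μ E F =
      (∑ x : Fin n → 𝒳, if cN x then
          ∏ k ∈ S, condProb μ {ω | ω.1 k = x k} {ω | ω.2 k = y k} else 0) /
      (∑ x : Fin n → 𝒳, if cD x then
          ∏ k ∈ S, condProb μ {ω | ω.1 k = x k} {ω | ω.2 k = y k} else 0) := by
  classical
  set q : Fin n → ℝ := fun k => ∑ a : 𝒳, pk k (a, y k) with hq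
  set P : ℝ := ∏ k ∈ univ \ S, pk k (xse k, y k) with hP
  set Q : ℝ := ∏ k ∈ S, q k with hQ
  set N : ℝ := ∑ x : Fin n → 𝒳, if cN x then ∏ k ∈ S, pk k (x k, y k) else 0 with hN
  set D : ℝ := ∑ x : Fin n → 𝒳, if cD x then ∏ k ∈ S, pk k (x k, y k) else 0 with hD
  -- key sum computation
  have key : ∀ (c : (Fin n → 𝒳) → Prop) (_ : DecidablePred c),
      (∀ x, c x → ∀ k ∉ S, x k = xse k) →
      (∑ x : Fin n → 𝒳, if c x then μ (x, y) else 0) =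
        P * ∑ x : Fin n → 𝒳, (if c x then ∏ k ∈ S, pk k (x k, y k) else 0) := by
    intro c _ hlo
    rw [Finset.mul_sum]
    refine Finset.sum_congr rfl fun x _ => ?_
    split_ifs with h
    · rw [hmem, ← Finset.prod_sdiff (Finset.subset_univ S)]
      congr 1
      refine Finset.prod_congr rfl fun k hk => ?_
      rw [hlo x h k (Finset.mem_sdiff.1 hk).2]
    · rw [mul_zero]
  have hPD : probOf μ F = P * D := by
    rw [hF, probOf_fixed_y μ cD y, key cD inferInstance hloD]
  have hPN : probOf μ (E ∩ F) = P * N := by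
    rw [hEF, probOf_fixed_y μ cN y, key cN inferInstance hloN]
  have hPnn : 0 ≤ P := Finset.prod_nonneg fun k _ => hpk0 k _
  have hDnn : 0 ≤ D := by
    refine Finset.sum_nonneg fun x _ => ?_
    split_ifs
    · exact Finset.prod_nonneg fun k _ => hpk0 k _
    · exact le_refl 0
  have hPDpos : 0 < P * D := hPD ▸ hpos
  have hPpos : 0 < P := by
    rcases mul_pos_iff.1 hPDpos with ⟨h1, _⟩ | ⟨h1, h2⟩
    · exact h1
    · exact absurd h2 (not_lt.2 hDnn)
  -- existence of a positive point to get Q > 0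
  have hQpos : 0 < Q := by
    have hex : ∃ ω : (Fin n → 𝒳) × (Fin n → 𝒴), 0 < F.indicator μ ω := by
      by_contra hcon
      push_neg at hcon
      have : probOf μ F ≤ 0 := Finset.sum_nonpos fun ω _ => hcon ω
      exact absurd hpos (not_lt.2 this)
    obtain ⟨ω, hω⟩ := hex
    have hωF : ω ∈ F := by
      by_contra hc
      rw [Set.indicator_of_notMem hc] at hω
      exact lt_irrefl 0 hω
    rw [Set.indicator_of_mem hωF] at hω
    rw [hF] at hωF
    obtain ⟨hcd, hy⟩ := hωF
    have hμω : μ (ω.1, y) = ∏ k, pk k (ω.1 k, y k) := hmem ω.1 y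
    have hprodpos : 0 < ∏ k, pk k (ω.1 k, y k) := by
      rw [← hμω]
      have : ω = (ω.1, y) := by rw [← hy]
      rwa [this] at hω
    have hfac : ∀ k : Fin n, 0 < pk k (ω.1 k, y k) := by
      intro k
      refine lt_of_le_of_ne (hpk0 k _) (Ne.symm ?_)
      intro h0
      have := Finset.prod_eq_zero (f := fun k => pk k (ω.1 k, y k)) (Finset.mem_univ k) h0
      rw [this] at hprodpos
      exact lt_irrefl 0 hprodpos
    refine Finset.prod_pos fun k _ => ?_
    calc (0:ℝ) < pk k (ω.1 k, y k) := hfac k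
      _ ≤ q k := Finset.single_le_sum (fun a _ => hpk0 k (a, y k)) (Finset.mem_univ (ω.1 k))
  -- rewrite RHS sums
  have hcp : ∀ (k : Fin n) (a : 𝒳),
      condProb μ {ω | ω.1 k = a} {ω | ω.2 k = y k} = pk k (a, y k) / q k :=
    fun k a => condProb_coord μ pk hpk1 hmem k a (y k)
  have hrw : ∀ (c : (Fin n → 𝒳) → Prop) (_ : DecidablePred c),
      (∑ x : Fin n → 𝒳, if c x then
          ∏ k ∈ S, condProb μ {ω | ω.1 k = x k} {ω | ω.2 k = y k} else 0) =
        (∑ x : Fin n → 𝒳, if c x then ∏ k ∈ S, pk k (x k, y k) else 0) / Q := by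
    intro c _
    rw [Finset.sum_div]
    refine Finset.sum_congr rfl fun x _ => ?_
    split_ifs with h
    · rw [Finset.prod_congr rfl fun k _ => hcp k (x k), Finset.prod_div_distrib]
    · rw [zero_div]
  rw [hrw cN inferInstance, hrw cD inferInstance, ← hN, ← hD]
  unfold condProb
  rw [hPN, hPD, mul_div_mul_left N D (ne_of_gt hPpos), div_div_div_comm,
    div_self (ne_of_gt hQpos), div_one]

set_option maxHeartbeats 2000000 in
/-- when `(X,Y)` is memoryless, the SC conditional probability
`μ_{C_{l+j}|C_1^{l+j−1}Y}(x_j | (c, x_1^{j−1}), y)` equals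
`[Σ_{x_{j+1}…x_n} (Π_{k=j}^n Prob(X_k = x_k|Y_k = y_k)) χ(A_j^n x_j^n = c − A_1^{j−1} x_1^{j−1})]
 / [Σ_{x_j…x_n} (Π_{k=j}^n Prob(X_k = x_k|Y_k = y_k)) χ(A_j^n x_j^n = c − A_1^{j−1} x_1^{j−1})]`. -/
theorem stmt18
    {𝒳 𝒴 : Type*} [Field 𝒳] [Fintype 𝒳] [DecidableEq 𝒳] [Fintype 𝒴]
    (n l : ℕ) (hl : l ≤ n)
    (μ : ((Fin n → 𝒳) × (Fin n → 𝒴)) → ℝ)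
    (hμ0 : ∀ ω, 0 ≤ μ ω) (hμ1 : ∑ ω, μ ω = 1)
    (pk : Fin n → 𝒳 × 𝒴 → ℝ)
    (hpk0 : ∀ k z, 0 ≤ pk k z) (hpk1 : ∀ k, ∑ z, pk k z = 1)
    (hmem : ∀ (x : Fin n → 𝒳) (y : Fin n → 𝒴), μ (x, y) = ∏ k, pk k (x k, y k))
    (A : Matrix (Fin l) (Fin n) 𝒳)
    (hAinv : IsUnit (A.submatrix id
      (fun k : Fin l => (⟨n - l + k.1, by have := k.2; omega⟩ : Fin n))))
    (j : ℕ) (hj1 : 1 ≤ j) (hj2 : j ≤ n - l)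
    (c : Fin l → 𝒳) (xs : Fin j → 𝒳) (y : Fin n → 𝒴)
    (hpos : 0 < probOf μ {ω | A.mulVec ω.1 = c ∧
      (∀ k : Fin (j - 1),
        ω.1 ⟨k.1, by have := k.2; omega⟩ = xs ⟨k.1, by have := k.2; omega⟩) ∧
      ω.2 = y}) :
    condProb μ
        {ω | Cword hl A ω.1 ⟨l + j - 1, by omega⟩ = xs ⟨j - 1, by omega⟩}
        {ω | prefixVec (Cword hl A ω.1) (l + j - 1) (by omega) =
            (fun k : Fin (l + j - 1) =>
              if h : k.1 < l then c ⟨k.1, h⟩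
              else xs ⟨k.1 - l, by have := k.2; omega⟩) ∧
          ω.2 = y} =
      (∑ x : Fin n → 𝒳,
          if (∀ k : Fin j, x ⟨k.1, by have := k.2; omega⟩ = xs k) ∧
              (∀ r : Fin l,
                ∑ k ∈ Finset.univ.filter (fun k : Fin n => j - 1 ≤ k.1), A r k * x k =
                  c r - ∑ k : Fin (j - 1),
                    A r ⟨k.1, by have := k.2; omega⟩ * xs ⟨k.1, by have := k.2; omega⟩) then
            ∏ k ∈ Finset.univ.filter (fun k : Fin n => j - 1 ≤ k.1),
              condProb μ {ω | ω.1 k = x k} {ω | ω.2 k = y k}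
          else 0) /
        (∑ x : Fin n → 𝒳,
          if (∀ k : Fin (j - 1),
                x ⟨k.1, by have := k.2; omega⟩ = xs ⟨k.1, by have := k.2; omega⟩) ∧
              (∀ r : Fin l,
                ∑ k ∈ Finset.univ.filter (fun k : Fin n => j - 1 ≤ k.1), A r k * x k =
                  c r - ∑ k : Fin (j - 1),
                    A r ⟨k.1, by have := k.2; omega⟩ * xs ⟨k.1, by have := k.2; omega⟩) then
            ∏ k ∈ Finset.univ.filter (fun k : Fin n => j - 1 ≤ k.1),
              condProb μ {ω | ω.1 k = x k} {ω | ω.2 k = y k}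
          else 0) := by

  classical
  have hjn : j ≤ n := le_trans hj2 (Nat.sub_le n l)
  have fapp : ∀ {m : ℕ} (v : Fin m → 𝒳) (a b : Fin m), a.1 = b.1 → v a = v b :=
    fun v a b h => congrArg v (Fin.ext h)
  -- the key iff for the prefix condition
  have haveA : ∀ x : Fin n → 𝒳,
      (prefixVec (Cword hl A x) (l + j - 1) (by omega) =
        (fun k : Fin (l + j - 1) =>
          if h : k.1 < l then c ⟨k.1, h⟩
          else xs ⟨k.1 - l, by have := k.2; omega⟩)) ↔
      (A.mulVec x = c ∧ ∀ k : Fin (j - 1),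
        x ⟨k.1, by have := k.2; omega⟩ = xs ⟨k.1, by have := k.2; omega⟩) := by
    intro x
    rw [funext_iff]
    constructor
    · intro H
      constructor
      · funext r
        have h1 := H ⟨r.1, by omega⟩
        simp only [prefixVec, Cword] at h1
        rw [dif_pos (show r.1 < l from r.2), dif_pos (show r.1 < l from r.2)] at h1
        exact h1
      · intro k
        have h1 := H ⟨l + k.1, by have := k.2; omega⟩
        simp only [prefixVec, Cword] at h1
        rw [dif_neg (by omega), dif_neg (by omega)] at h1
        refine Eq.trans ?_ (Eq.trans h1 ?_)
        · exact fapp x _ _ (by simp only [Fin.val_mk]; omega)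
        · exact fapp xs _ _ (by simp only [Fin.val_mk]; omega)
    · rintro ⟨hc, hpre⟩ k
      simp only [prefixVec, Cword]
      by_cases hk : k.1 < l
      · rw [dif_pos hk, dif_pos hk]
        exact congrFun hc ⟨k.1, hk⟩
      · rw [dif_neg hk, dif_neg hk]
        refine Eq.trans (fapp x _ ⟨k.1 - l, by have := k.2; omega⟩ rfl) ?_
        exact hpre ⟨k.1 - l, by have := k.2; omega⟩
  -- the key iff for the linear condition
  have haveB : ∀ x : Fin n → 𝒳,
      (∀ k : Fin (j - 1),
        x ⟨k.1, by have := k.2; omega⟩ = xs ⟨k.1, by have := k.2; omega⟩) →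
      ((A.mulVec x = c) ↔ ∀ r : Fin l,
        ∑ k ∈ Finset.univ.filter (fun k : Fin n => j - 1 ≤ k.1), A r k * x k =
          c r - ∑ k : Fin (j - 1),
            A r ⟨k.1, by have := k.2; omega⟩ * xs ⟨k.1, by have := k.2; omega⟩) := by
    intro x hp
    rw [funext_iff]
    refine forall_congr' fun r => ?_
    have hmv : A.mulVec x r = ∑ k, A r k * x k := by
      simp [Matrix.mulVec, dotProduct]
    have hsplit : (∑ k, A r k * x k) =
        (∑ k ∈ univ.filter (fun k : Fin n => k.1 < j - 1), A r k * x k) +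
          ∑ k ∈ univ.filter (fun k : Fin n => j - 1 ≤ k.1), A r k * x k := by
      rw [← Finset.sum_filter_add_sum_filter_not univ (fun k : Fin n => k.1 < j - 1)
        (fun k => A r k * x k)]
      congr 1
      refine Finset.sum_congr ?_ fun _ _ => rfl
      ext k
      simp [not_lt]
    have hlo : (∑ k ∈ univ.filter (fun k : Fin n => k.1 < j - 1), A r k * x k) =
        ∑ k : Fin (j - 1),
          A r ⟨k.1, by have := k.2; omega⟩ * xs ⟨k.1, by have := k.2; omega⟩ := by
      rw [sum_filter_lt (show j - 1 ≤ n by omega) (fun k => A r k * x k)]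
      refine Finset.sum_congr rfl fun k _ => ?_
      exact congrArg₂ (· * ·) rfl (hp k)
    rw [hmv, hsplit, hlo]
    constructor <;> intro h <;> linear_combination h
  -- identification of the E-coordinate
  have haveE : ∀ x : Fin n → 𝒳,
      Cword hl A x ⟨l + j - 1, by omega⟩ = x ⟨j - 1, by omega⟩ := by
    intro x
    simp only [Cword]
    rw [dif_neg (by omega)]
    exact fapp x _ _ (by simp only [Fin.val_mk]; omega)
  -- prefix condition for Fin j split
  have haveC : ∀ x : Fin n → 𝒳,
      (∀ k : Fin j, x ⟨k.1, by have := k.2; omega⟩ = xs k) ↔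
      (x ⟨j - 1, by omega⟩ = xs ⟨j - 1, by omega⟩ ∧
        ∀ k : Fin (j - 1),
          x ⟨k.1, by have := k.2; omega⟩ = xs ⟨k.1, by have := k.2; omega⟩) := by
    intro x
    constructor
    · intro H
      refine ⟨?_, fun k => ?_⟩
      · exact H ⟨j - 1, by omega⟩
      · refine Eq.trans (H ⟨k.1, by have := k.2; omega⟩) ?_
        exact fapp xs _ _ rfl
    · rintro ⟨h1, h2⟩ k
      by_cases hk : k.1 < j - 1
      · refine Eq.trans (fapp x ⟨k.1, by have := k.2; omega⟩ ⟨k.1, by have := k.2; omega⟩ rfl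
            |>.symm.trans (h2 ⟨k.1, hk⟩)) ?_
        exact fapp xs _ _ rfl
      · have hk1 : k.1 = j - 1 := by have := k.2; omega
        refine Eq.trans (fapp x _ ⟨j - 1, by omega⟩ hk1) (Eq.trans h1 (fapp xs _ _ hk1.symm))
  refine master μ pk hpk0 hpk1 hmem _ _ _ _ y _
    (fun k => if h : k.1 < j then xs ⟨k.1, h⟩ else 0) ?_ ?_ ?_ ?_ ?_
  · -- E ∩ F = {ω | cN ω.1 ∧ ω.2 = y}
    ext ω
    simp only [Set.mem_inter_iff, Set.mem_setOf_eq]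
    constructor
    · rintro ⟨hE, hpv, hy⟩
      obtain ⟨hc, hpre⟩ := (haveA ω.1).1 hpv
      refine ⟨⟨(haveC ω.1).2 ⟨(haveE ω.1).symm.trans hE, hpre⟩, (haveB ω.1 hpre).1 hc⟩, hy⟩
    · rintro ⟨⟨hpj, hlin⟩, hy⟩
      obtain ⟨h1, h2⟩ := (haveC ω.1).1 hpj
      exact ⟨(haveE ω.1).trans h1, (haveA ω.1).2 ⟨(haveB ω.1 h2).2 hlin, h2⟩, hy⟩
  · -- F = {ω | cD ω.1 ∧ ω.2 = y}
    ext ω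
    simp only [Set.mem_setOf_eq]
    constructor
    · rintro ⟨hpv, hy⟩
      obtain ⟨hc, hpre⟩ := (haveA ω.1).1 hpv
      exact ⟨⟨hpre, (haveB ω.1 hpre).1 hc⟩, hy⟩
    · rintro ⟨⟨hpre, hlin⟩, hy⟩
      exact ⟨(haveA ω.1).2 ⟨(haveB ω.1 hpre).2 hlin, hpre⟩, hy⟩
  · -- hloN
    rintro x ⟨hpj, _⟩ k hk
    simp only [Finset.mem_filter, Finset.mem_univ, true_and, not_le] at hk
    refine Eq.trans ?_ (Eq.symm (dif_pos (show k.1 < j by omega)))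
    exact Eq.trans (fapp x k ⟨k.1, by omega⟩ rfl) (hpj ⟨k.1, by omega⟩)
  · -- hloD
    rintro x ⟨hpre, _⟩ k hk
    simp only [Finset.mem_filter, Finset.mem_univ, true_and, not_le] at hk
    refine Eq.trans ?_ (Eq.symm (dif_pos (show k.1 < j by omega)))
    refine Eq.trans (fapp x k ⟨k.1, by omega⟩ rfl) ?_
    exact Eq.trans (hpre ⟨k.1, by omega⟩) (fapp xs _ _ rfl)
  · -- positivity
    have hset : {ω : (Fin n → 𝒳) × (Fin n → 𝒴) |
        prefixVec (Cword hl A ω.1) (l + j - 1) (by omega) =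
          (fun k : Fin (l + j - 1) =>
            if h : k.1 < l then c ⟨k.1, h⟩
            else xs ⟨k.1 - l, by have := k.2; omega⟩) ∧ ω.2 = y} =
        {ω : (Fin n → 𝒳) × (Fin n → 𝒴) | A.mulVec ω.1 = c ∧
          (∀ k : Fin (j - 1),
            ω.1 ⟨k.1, by have := k.2; omega⟩ = xs ⟨k.1, by have := k.2; omega⟩) ∧
          ω.2 = y} := by
      ext ω
      simp only [Set.mem_setOf_eq]
      constructor
      · rintro ⟨hpv, hy⟩
        obtain ⟨hc, hpre⟩ := (haveA ω.1).1 hpv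
        exact ⟨hc, hpre, hy⟩
      · rintro ⟨hc, hpre, hy⟩
        exact ⟨(haveA ω.1).2 ⟨hc, hpre⟩, hy⟩
    rw [hset]
    exact hpos
end
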